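/- Let A be a finite set, π_a : A → A permutations, σ_b(a) = (π_a b)a, ν the Bernoulli measure with ν[σ_b] = p(b) for a positive probability vector p, M(a',a) = p(π_a^{-1}a') with invariant probability vector q. Define, for each ℓ ≥ 0 and a ∈ A^{2^ℓ}, μ[a] = q(a_{2^ℓ}) · exp( ∑_{m=1}^{ℓ} ∑_{k=1}^{2^{ℓ−m}} log p(π_{a_{2^m k}}^{-1} a_{2^{m−1}(2k−1)}) ). Then these values are consistent (∑ over extensions of a word of length 2^ℓ to length 2^{ℓ+1} recovers μ[a]) and define a probability measure μ_ν on A^ℕ satisfying the substitution fixed-point equation μ_ν[a] = μ_ν[a_2 a_4 ⋯ a_{2^ℓ}] ∏_{k=1}^{2^{ℓ−1}} p(π_{a_{2k}}^{-1} a_{2k−1}) for all a ∈ A^{2^ℓ}. -/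

import Mathlib

open MeasureTheory

/-- Cylinder set fixing the coordinates in a finite set F. -/
def cylOn {A : Type*} (F : Finset ℕ) (a : ℕ → A) : Set (ℕ → A) :=
  {x | ∀ n ∈ F, x n = a n}

/-- The candidate cylinder values (0-based indexing: the paper's a_j is `a (j-1)`):
v ℓ a = q(a_{2^ℓ}) · exp( ∑_{m=1}^{ℓ} ∑_{k=1}^{2^{ℓ−m}}
          log p(π_{a_{2^m k}}^{-1} a_{2^{m−1}(2k−1)}) ). -/
noncomputable def wordVal {A : Type*} [Fintype A]
    (π : A → Equiv.Perm A) (p q : A → ℝ) (ℓ : ℕ) (a : ℕ → A) : ℝ :=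
  q (a (2 ^ ℓ - 1)) *
    Real.exp (∑ m ∈ Finset.Icc 1 ℓ, ∑ k ∈ Finset.Icc 1 (2 ^ (ℓ - m)),
      Real.log (p ((π (a (2 ^ m * k - 1))).symm (a (2 ^ (m - 1) * (2 * k - 1) - 1)))))

/-- Extension of a word of length 2^ℓ by a second half c, giving a word of length
2^{ℓ+1}. -/
def extWord {A : Type*} (ℓ : ℕ) (a : ℕ → A) (c : Fin (2 ^ ℓ) → A) : ℕ → A :=
  fun n => if n < 2 ^ ℓ then a n
    else if h : n - 2 ^ ℓ < 2 ^ ℓ then c ⟨n - 2 ^ ℓ, h⟩ else a n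


namespace Stmt12Aux
open Finset


section Comb

variable {A : Type*} [Fintype A] [DecidableEq A] [Nonempty A]

lemma prod_Ioc_shift {M : Type*} [CommMonoid M] (a n : ℕ) (f : ℕ → M) :
    ∏ i ∈ Ioc a (a + n), f i = ∏ i ∈ range n, f (a + 1 + i) := by
  refine Finset.prod_nbij' (fun i => i - (a+1)) (fun j => a + 1 + j) ?_ ?_ ?_ ?_ ?_ <;>
    intro x hx <;> simp only [mem_Ioc, mem_range] at * <;> try omega
  have : a + 1 + (x - (a+1)) = x := by omega
  rw [this]

noncomputable def toSeq {n : ℕ} (c : Fin n → A) : ℕ → A :=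
  fun k => if h : k < n then c ⟨k, h⟩ else Classical.arbitrary A

/-- single transition factor -/
def trm (π : A → Equiv.Perm A) (p : A → ℝ) (a : ℕ → A) (m k : ℕ) : ℝ :=
  p ((π (a (2 ^ m * k - 1))).symm (a (2 ^ (m - 1) * (2 * k - 1) - 1)))

def wprod (π : A → Equiv.Perm A) (p : A → ℝ) (ℓ : ℕ) (a : ℕ → A) : ℝ :=
  ∏ m ∈ Icc 1 ℓ, ∏ k ∈ Icc 1 (2 ^ (ℓ - m)), trm π p a m k

variable {π : A → Equiv.Perm A} {p q : A → ℝ}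

omit [DecidableEq A] [Nonempty A] in
lemma wordVal_eq (hp : ∀ a, 0 < p a) (ℓ : ℕ) (a : ℕ → A) :
    wordVal π p q ℓ a = q (a (2 ^ ℓ - 1)) * wprod π p ℓ a := by
  unfold wordVal wprod
  congr 1
  rw [Real.exp_sum]
  refine Finset.prod_congr rfl fun m _ => ?_
  rw [Real.exp_sum]
  exact Finset.prod_congr rfl fun k _ => Real.exp_log (hp _)

omit [DecidableEq A] [Nonempty A] in
lemma trm_congr {a b : ℕ → A} {ℓ : ℕ} (hab : ∀ n < 2 ^ ℓ, a n = b n)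
    {m k : ℕ} (hm : m ∈ Icc 1 ℓ) (hk : k ∈ Icc 1 (2 ^ (ℓ - m))) :
    trm π p a m k = trm π p b m k := by
  simp only [mem_Icc] at hm hk
  have h2 : 2 ^ m * k ≤ 2 ^ ℓ := by
    calc 2 ^ m * k ≤ 2 ^ m * 2 ^ (ℓ - m) := Nat.mul_le_mul_left _ hk.2
    _ = 2 ^ ℓ := by rw [← pow_add]; congr 1; omega
  have hk1 : 1 ≤ k := hk.1
  have hm1 : 1 ≤ m := hm.1
  have hpos : 0 < 2 ^ m * k := Nat.mul_pos (Nat.two_pow_pos m) hk1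
  have h1 : 2 ^ m * k - 1 < 2 ^ ℓ := by omega
  have h3 : 2 ^ (m - 1) * (2 * k - 1) - 1 < 2 ^ ℓ := by
    have e1 : 2 ^ (m-1) * (2*k-1) < 2 ^ m * k := by
      have h2m : 2 ^ m = 2 ^ (m-1) * 2 := by
        rw [← pow_succ]; congr 1; omega
      rw [h2m, mul_assoc]
      exact mul_lt_mul_of_pos_left (by omega) (Nat.two_pow_pos (m-1))
    omega
  unfold trm
  rw [hab _ h1, hab _ h3]

omit [DecidableEq A] [Nonempty A] in
lemma wprod_congr {a b : ℕ → A} {ℓ : ℕ} (hab : ∀ n < 2 ^ ℓ, a n = b n) :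
    wprod π p ℓ a = wprod π p ℓ b := by
  unfold wprod
  exact Finset.prod_congr rfl fun m hm => Finset.prod_congr rfl fun k hk =>
    trm_congr hab hm hk

omit [DecidableEq A] [Nonempty A] in
lemma wordVal_congr (hp : ∀ a, 0 < p a) {a b : ℕ → A} {ℓ : ℕ}
    (hab : ∀ n < 2 ^ ℓ, a n = b n) :
    wordVal π p q ℓ a = wordVal π p q ℓ b := by
  rw [wordVal_eq hp, wordVal_eq hp, wprod_congr hab,
    hab _ (by have := Nat.one_le_two_pow (n := ℓ); omega)]

omit [DecidableEq A] [Nonempty A] in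
lemma trm_succ (a : ℕ → A) {m k : ℕ} (hm : 1 ≤ m) (hk : 1 ≤ k) :
    trm π p a (m + 1) k = trm π p (fun n => a (2 * n + 1)) m k := by
  have hu : 2 ^ (m+1) * k = 2 * (2 ^ m * k) := by rw [pow_succ]; ring
  have hupos : 0 < 2 ^ m * k := Nat.mul_pos (Nat.two_pow_pos m) hk
  have hv : 2 ^ m * (2 * k - 1) = 2 * (2 ^ (m-1) * (2 * k - 1)) := by
    have h2m : 2 ^ m = 2 * 2 ^ (m-1) := by
      rw [← pow_succ']; congr 1; omega
    rw [h2m, mul_assoc]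
  have hvpos : 0 < 2 ^ (m-1) * (2 * k - 1) := Nat.mul_pos (Nat.two_pow_pos _) (by omega)
  have e1 : 2 ^ (m+1) * k - 1 = 2 * (2 ^ m * k - 1) + 1 := by omega
  have e2 : 2 ^ (m+1-1) * (2 * k - 1) - 1 = 2 * (2 ^ (m-1) * (2 * k - 1) - 1) + 1 := by
    simp only [Nat.add_sub_cancel]
    omega
  unfold trm
  rw [e1, e2]

omit [DecidableEq A] [Nonempty A] in
lemma trm_one (a : ℕ → A) (k : ℕ) :
    trm π p a 1 (k + 1) = p ((π (a (2 * k + 1))).symm (a (2 * k))) := by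
  have e1 : 2 ^ 1 * (k+1) - 1 = 2 * k + 1 := by omega
  have e2 : 2 ^ (1-1) * (2 * (k+1) - 1) - 1 = 2 * k := by omega
  unfold trm
  rw [e1, e2]

omit [DecidableEq A] [Nonempty A] in
/-- recursion for wprod -/
lemma wprod_succ (ℓ : ℕ) (a : ℕ → A) :
    wprod π p (ℓ + 1) a = wprod π p ℓ (fun n => a (2 * n + 1)) *
      ∏ k ∈ Finset.range (2 ^ ℓ), p ((π (a (2 * k + 1))).symm (a (2 * k))) := by
  unfold wprod
  rw [show Icc 1 (ℓ+1) = Ioc 0 (ℓ+1) from Finset.Icc_add_one_left_eq_Ioc 0 (ℓ+1),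
    ← Finset.prod_Ioc_consecutive _ (Nat.zero_le 1) (by omega : 1 ≤ ℓ + 1)]
  have h1 : ∏ m ∈ Ioc 0 1, ∏ k ∈ Icc 1 (2 ^ (ℓ + 1 - m)), trm π p a m k
      = ∏ k ∈ Finset.range (2 ^ ℓ), p ((π (a (2 * k + 1))).symm (a (2 * k))) := by
    rw [show (1:ℕ) = 0 + 1 from rfl, prod_Ioc_shift]
    simp only [Finset.prod_range_one, Nat.zero_add]
    rw [show Icc 1 (2 ^ (ℓ + 1 - 1)) = Ioc 0 (0 + 2 ^ ℓ) from by rw [← Finset.Icc_add_one_left_eq_Ioc]; congr 1; norm_num,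
      prod_Ioc_shift]
    refine Finset.prod_congr rfl fun k _ => ?_
    rw [show 0 + 1 + k = k + 1 from by omega, trm_one]
  have h2 : ∏ m ∈ Ioc 1 (ℓ + 1), ∏ k ∈ Icc 1 (2 ^ (ℓ + 1 - m)), trm π p a m k
      = ∏ m ∈ Icc 1 ℓ, ∏ k ∈ Icc 1 (2 ^ (ℓ - m)), trm π p (fun n => a (2 * n + 1)) m k := by
    rw [show ℓ + 1 = 1 + ℓ from by omega, prod_Ioc_shift,
      show Icc 1 ℓ = Ioc 0 (0 + ℓ) from by rw [← Finset.Icc_add_one_left_eq_Ioc]; congr 1; omega,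
      prod_Ioc_shift]
    refine Finset.prod_congr rfl fun m hm => ?_
    simp only [mem_range] at hm
    rw [show (1:ℕ) + 1 + m = (0 + 1 + m) + 1 from by omega]
    have he : 1 + ℓ - (0 + 1 + m + 1) = ℓ - (0 + 1 + m) := by omega
    rw [he]
    refine Finset.prod_congr rfl fun k hk => ?_
    simp only [mem_Icc] at hk
    exact trm_succ a (by omega) hk.1
  rw [h1, h2, mul_comm]

omit [DecidableEq A] [Nonempty A] in
/-- statement (2): the substitution recursion for wordVal -/
lemma wordVal_succ (hp : ∀ a, 0 < p a) (ℓ : ℕ) (a : ℕ → A) :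
    wordVal π p q (ℓ + 1) a =
      wordVal π p q ℓ (fun n => a (2 * n + 1)) *
        ∏ k ∈ Finset.range (2 ^ ℓ), p ((π (a (2 * k + 1))).symm (a (2 * k))) := by
  rw [wordVal_eq hp, wordVal_eq hp, wprod_succ]
  have he : 2 ^ (ℓ + 1) - 1 = 2 * (2 ^ ℓ - 1) + 1 := by
    have := Nat.one_le_two_pow (n := ℓ)
    have : 2 ^ (ℓ+1) = 2 * 2 ^ ℓ := by rw [pow_succ]; ring
    omega
  rw [he]
  ring


lemma sum_prod_eval {A : Type*} [Fintype A] [DecidableEq A] (n : ℕ) (f : Fin n → A → ℝ) :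
    ∑ e : Fin n → A, ∏ k : Fin n, f k (e k) = ∏ k : Fin n, ∑ j : A, f k j := by
  rw [← Fintype.piFinset_univ, Finset.sum_prod_piFinset]

lemma toSeq_lt {n : ℕ} (c : Fin n → A) {k : ℕ} (h : k < n) : toSeq c k = c ⟨k, h⟩ :=
  dif_pos h

def halfEquiv (ℓ : ℕ) : ((Fin (2^ℓ) → A) × (Fin (2^ℓ) → A)) ≃ (Fin (2^(ℓ+1)) → A) where
  toFun oe := fun j => if j.val % 2 = 1
    then oe.1 ⟨j.val / 2, by
      have h2 : (2:ℕ)^(ℓ+1) = 2*2^ℓ := by rw [pow_succ]; ring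
      have := j.2; omega⟩
    else oe.2 ⟨j.val / 2, by
      have h2 : (2:ℕ)^(ℓ+1) = 2*2^ℓ := by rw [pow_succ]; ring
      have := j.2; omega⟩
  invFun c := (fun k => c ⟨2*k.val+1, by
      have h2 : (2:ℕ)^(ℓ+1) = 2*2^ℓ := by rw [pow_succ]; ring
      have := k.2; omega⟩,
    fun k => c ⟨2*k.val, by
      have h2 : (2:ℕ)^(ℓ+1) = 2*2^ℓ := by rw [pow_succ]; ring
      have := k.2; omega⟩)
  left_inv := by
    rintro ⟨o, e⟩
    refine Prod.ext ?_ ?_ <;> funext k <;> simp only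
    · rw [if_pos (by first | omega | (simp only [Fin.val_mk]; omega))]
      congr 1; exact Fin.ext (by first | omega | (simp only [Fin.val_mk]; omega))
    · rw [if_neg (by first | omega | (simp only [Fin.val_mk]; omega))]
      congr 1; exact Fin.ext (by first | omega | (simp only [Fin.val_mk]; omega))
  right_inv := by
    intro c
    funext j
    simp only
    by_cases h : j.val % 2 = 1
    · rw [if_pos h]; congr 1; exact Fin.ext (by first | omega | (simp only [Fin.val_mk]; omega))
    · rw [if_neg h]; congr 1; exact Fin.ext (by first | omega | (simp only [Fin.val_mk]; omega))

lemma toSeq_halfEquiv_odd {ℓ : ℕ} (o e : Fin (2^ℓ) → A) (n : ℕ) :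
    toSeq (halfEquiv ℓ (o, e)) (2 * n + 1) = toSeq o n := by
  have h2 : (2:ℕ)^(ℓ+1) = 2*2^ℓ := by rw [pow_succ]; ring
  unfold toSeq
  by_cases h : n < 2^ℓ
  · rw [dif_pos (by omega), dif_pos h]
    show (halfEquiv ℓ (o,e)) _ = _
    unfold halfEquiv
    simp only [Equiv.coe_fn_mk]
    rw [if_pos (by first | omega | (simp only [Fin.val_mk]; omega))]
    congr 1; exact Fin.ext (by first | omega | (simp only [Fin.val_mk]; omega))
  · rw [dif_neg (by omega), dif_neg h]

lemma toSeq_halfEquiv_even {ℓ : ℕ} (o e : Fin (2^ℓ) → A) (n : ℕ) :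
    toSeq (halfEquiv ℓ (o, e)) (2 * n) = toSeq e n := by
  have h2 : (2:ℕ)^(ℓ+1) = 2*2^ℓ := by rw [pow_succ]; ring
  unfold toSeq
  by_cases h : n < 2^ℓ
  · rw [dif_pos (by omega), dif_pos h]
    show (halfEquiv ℓ (o,e)) _ = _
    unfold halfEquiv
    simp only [Equiv.coe_fn_mk]
    rw [if_neg (by first | omega | (simp only [Fin.val_mk]; omega))]
    congr 1; exact Fin.ext (by first | omega | (simp only [Fin.val_mk]; omega))
  · rw [dif_neg (by omega), dif_neg h]

/-- sum over the even-subword choices -/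
lemma sum_even (hpsum : ∑ a, p a = 1) (n : ℕ) (g : ℕ → A) :
    ∑ e : Fin n → A, ∏ k ∈ range n, p ((π (g k)).symm (toSeq e k)) = 1 := by
  have h1 : ∀ e : Fin n → A, ∏ k ∈ range n, p ((π (g k)).symm (toSeq e k))
      = ∏ k : Fin n, p ((π (g k.val)).symm (e k)) := by
    intro e
    rw [← Fin.prod_univ_eq_prod_range (fun k => p ((π (g k)).symm (toSeq e k))) n]
    exact Finset.prod_congr rfl fun k _ => by rw [toSeq_lt e k.2]
  rw [Finset.sum_congr rfl fun e _ => h1 e,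
    sum_prod_eval n (fun k y => p ((π (g k.val)).symm y))]
  have : ∀ k : Fin n, ∑ j : A, p ((π (g k.val)).symm j) = 1 := by
    intro k
    rw [Equiv.sum_comp (π (g k.val)).symm p]
    exact hpsum
  rw [Finset.prod_congr rfl (fun k _ => this k), Finset.prod_const_one]


lemma wprod_zero (a : ℕ → A) : wprod π p 0 a = 1 := by
  unfold wprod
  simp

def singleEquiv : (Fin (2^0) → A) ≃ A where
  toFun := fun c => c ⟨0, by norm_num⟩
  invFun := fun x _ => x
  left_inv := by
    intro c; funext i
    have h01 : (2:ℕ)^0 = 1 := pow_zero 2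
    have hi : i = ⟨0, by omega⟩ := Fin.ext (by have := i.2; omega)
    rw [hi]
  right_inv := fun x => rfl

lemma sum_last (hpsum : ∑ a, p a = 1) :
    ∀ (ℓ : ℕ) (b : A),
      ∑ c : Fin (2^ℓ) → A,
        (if toSeq c (2^ℓ - 1) = b then wprod π p ℓ (toSeq c) else 0) = 1 := by
  intro ℓ
  induction ℓ with
  | zero =>
    intro b
    rw [← Equiv.sum_comp (singleEquiv (A := A)).symm]
    have h0 : ∀ x : A, toSeq ((singleEquiv (A := A)).symm x) (2^0 - 1) = x := by
      intro x; rw [toSeq_lt _ (by norm_num)]; rfl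
    simp only [h0, wprod_zero]
    simp
  | succ ℓ ih =>
    intro b
    rw [← Equiv.sum_comp (halfEquiv ℓ), Fintype.sum_prod_type]
    have key : ∀ o e : Fin (2^ℓ) → A,
        (if toSeq (halfEquiv ℓ (o, e)) (2^(ℓ+1) - 1) = b
          then wprod π p (ℓ+1) (toSeq (halfEquiv ℓ (o, e))) else 0)
        = (if toSeq o (2^ℓ - 1) = b
            then wprod π p ℓ (toSeq o) *
              ∏ k ∈ Finset.range (2^ℓ), p ((π (toSeq o k)).symm (toSeq e k)) else 0) := by
      intro o e
      have h2 : (2:ℕ)^(ℓ+1) = 2*2^ℓ := by rw [pow_succ]; ring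
      have e1 : 2^(ℓ+1) - 1 = 2*(2^ℓ - 1) + 1 := by
        have := Nat.one_le_two_pow (n := ℓ); omega
      have hcond : toSeq (halfEquiv ℓ (o, e)) (2^(ℓ+1) - 1) = toSeq o (2^ℓ - 1) := by
        rw [e1, toSeq_halfEquiv_odd]
      have hodd : (fun n => toSeq (halfEquiv ℓ (o, e)) (2*n+1)) = toSeq o := by
        funext n; exact toSeq_halfEquiv_odd o e n
      have hw : wprod π p (ℓ+1) (toSeq (halfEquiv ℓ (o, e)))
          = wprod π p ℓ (toSeq o) *
              ∏ k ∈ Finset.range (2^ℓ), p ((π (toSeq o k)).symm (toSeq e k)) := by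
        rw [wprod_succ, hodd]
        congr 1
        refine Finset.prod_congr rfl fun k _ => ?_
        rw [toSeq_halfEquiv_odd, toSeq_halfEquiv_even]
      rw [hcond, hw]
    rw [Finset.sum_congr rfl fun o _ => Finset.sum_congr rfl fun e _ => key o e]
    have inner : ∀ o : Fin (2^ℓ) → A,
        ∑ e : Fin (2^ℓ) → A,
          (if toSeq o (2^ℓ - 1) = b
            then wprod π p ℓ (toSeq o) *
              ∏ k ∈ Finset.range (2^ℓ), p ((π (toSeq o k)).symm (toSeq e k)) else 0)
        = (if toSeq o (2^ℓ - 1) = b then wprod π p ℓ (toSeq o) else 0) := by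
      intro o
      by_cases hC : toSeq o (2^ℓ - 1) = b
      · simp only [if_pos hC, ← Finset.mul_sum]
        rw [sum_even hpsum (2^ℓ) (toSeq o), mul_one]
      · simp [hC]
    rw [Finset.sum_congr rfl fun o _ => inner o]
    exact ih b

lemma extWord_lt {ℓ : ℕ} (a : ℕ → A) (c : Fin (2^ℓ) → A) {n : ℕ} (h : n < 2^ℓ) :
    extWord ℓ a c n = a n := if_pos h

lemma extWord_ge {ℓ : ℕ} (a : ℕ → A) (c : Fin (2^ℓ) → A) {n : ℕ}
    (h1 : 2^ℓ ≤ n) (h2 : n < 2^(ℓ+1)) :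
    extWord ℓ a c n = toSeq c (n - 2^ℓ) := by
  have hlt : n - 2^ℓ < 2^ℓ := by
    have : (2:ℕ)^(ℓ+1) = 2*2^ℓ := by rw [pow_succ]; ring
    omega
  unfold extWord
  rw [if_neg (by omega), dif_pos hlt]
  exact (toSeq_lt c hlt).symm

lemma wprod_ext (ℓ : ℕ) (a : ℕ → A) (c : Fin (2^ℓ) → A) :
    wprod π p (ℓ+1) (extWord ℓ a c) =
      (wprod π p ℓ a * wprod π p ℓ (toSeq c)) *
        p ((π (toSeq c (2^ℓ - 1))).symm (a (2^ℓ - 1))) := by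
  have h2 : (2:ℕ)^(ℓ+1) = 2*2^ℓ := by rw [pow_succ]; ring
  have h1ℓ := Nat.one_le_two_pow (n := ℓ)
  unfold wprod
  rw [Finset.prod_Icc_succ_top (by omega : 1 ≤ ℓ+1)]
  have htop : ∏ k ∈ Icc 1 (2^(ℓ+1-(ℓ+1))), trm π p (extWord ℓ a c) (ℓ+1) k
      = p ((π (toSeq c (2^ℓ - 1))).symm (a (2^ℓ - 1))) := by
    rw [show ℓ+1-(ℓ+1) = 0 from by omega, pow_zero, Finset.Icc_self, Finset.prod_singleton]
    unfold trm
    have i1 : 2^(ℓ+1) * 1 - 1 = 2^(ℓ+1) - 1 := by omega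
    have i2 : 2^(ℓ+1-1) * (2*1 - 1) - 1 = 2^ℓ - 1 := by
      rw [show ℓ+1-1 = ℓ from by omega]; omega
    rw [i1, i2]
    have hx1 : extWord ℓ a c (2^(ℓ+1) - 1) = toSeq c (2^ℓ - 1) := by
      rw [extWord_ge a c (by omega) (by omega)]
      congr 1; omega
    have hx2 : extWord ℓ a c (2^ℓ - 1) = a (2^ℓ - 1) := extWord_lt a c (by omega)
    rw [hx1, hx2]
  rw [htop]
  congr 1
  rw [← Finset.prod_mul_distrib]
  refine Finset.prod_congr rfl fun m hm => ?_
  simp only [mem_Icc] at hm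
  have hpow : 2^m * 2^(ℓ-m) = 2^ℓ := by rw [← pow_add]; congr 1; omega
  have hpow1 : (2:ℕ)^(ℓ+1-m) = 2^(ℓ-m) + 2^(ℓ-m) := by
    rw [show ℓ+1-m = (ℓ-m)+1 from by omega, pow_succ]; ring
  rw [show Icc 1 (2^(ℓ+1-m)) = Ioc 0 (2^(ℓ-m) + 2^(ℓ-m)) from by
      rw [← Finset.Icc_add_one_left_eq_Ioc, hpow1]; rfl,
    ← Finset.prod_Ioc_consecutive (fun j => trm π p (extWord ℓ a c) m j)
      (Nat.zero_le (2^(ℓ-m))) (Nat.le_add_right (2^(ℓ-m)) (2^(ℓ-m)))]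
  have hp1 : ∏ k ∈ Ioc 0 (2^(ℓ-m)), trm π p (extWord ℓ a c) m k
      = ∏ k ∈ Icc 1 (2^(ℓ-m)), trm π p a m k := by
    rw [← Finset.Icc_add_one_left_eq_Ioc]
    refine Finset.prod_congr rfl fun k hk => ?_
    exact trm_congr (fun n hn => extWord_lt a c hn) (by simp only [mem_Icc]; omega) hk
  have hp2 : ∏ k ∈ Ioc (2^(ℓ-m)) (2^(ℓ-m) + 2^(ℓ-m)), trm π p (extWord ℓ a c) m k
      = ∏ k ∈ Icc 1 (2^(ℓ-m)), trm π p (toSeq c) m k := by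
    rw [prod_Ioc_shift, show Icc 1 (2^(ℓ-m)) = Ioc 0 (0 + 2^(ℓ-m)) from by
        rw [← Finset.Icc_add_one_left_eq_Ioc]; congr 1; omega, prod_Ioc_shift]
    refine Finset.prod_congr rfl fun k hk => ?_
    simp only [mem_range] at hk
    simp only [Nat.zero_add]
    rw [Nat.add_comm 1 k]
    have hK : 1 ≤ k + 1 ∧ k + 1 ≤ 2^(ℓ-m) := by omega
    have hi1 : 2^m * (2^(ℓ-m) + 1 + k) = 2^ℓ + 2^m * (k+1) := by
      rw [show 2^(ℓ-m) + 1 + k = 2^(ℓ-m) + (k+1) from by omega, mul_add, hpow]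
    have hb1 : 1 ≤ 2^m * (k+1) := Nat.mul_pos (Nat.two_pow_pos m) (by omega)
    have hb1' : 2^m * (k+1) ≤ 2^ℓ := by
      calc 2^m * (k+1) ≤ 2^m * 2^(ℓ-m) := Nat.mul_le_mul_left _ hK.2
      _ = 2^ℓ := hpow
    have hpow2 : 2^(m-1) * (2 * 2^(ℓ-m)) = 2^ℓ := by
      rw [show 2 * 2^(ℓ-m) = 2^((ℓ-m)+1) from by rw [pow_succ]; ring, ← pow_add]
      congr 1; omega
    have hi2 : 2^(m-1) * (2*(2^(ℓ-m) + 1 + k) - 1) = 2^ℓ + 2^(m-1) * (2*(k+1) - 1) := by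
      rw [show 2*(2^(ℓ-m) + 1 + k) - 1 = 2*2^(ℓ-m) + (2*(k+1) - 1) from by omega, mul_add, hpow2]
    have hb2 : 1 ≤ 2^(m-1) * (2*(k+1) - 1) := Nat.mul_pos (Nat.two_pow_pos _) (by omega)
    have hb2' : 2^(m-1) * (2*(k+1) - 1) ≤ 2^ℓ := by
      calc 2^(m-1) * (2*(k+1) - 1) ≤ 2^(m-1) * (2 * 2^(ℓ-m)) :=
        Nat.mul_le_mul_left _ (by omega)
      _ = 2^ℓ := hpow2
    unfold trm
    have hx1 : extWord ℓ a c (2^m * (2^(ℓ-m) + 1 + k) - 1) = toSeq c (2^m * (k+1) - 1) := by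
      rw [hi1, extWord_ge a c (by omega) (by omega)]
      congr 1; omega
    have hx2 : extWord ℓ a c (2^(m-1) * (2*(2^(ℓ-m) + 1 + k) - 1) - 1)
        = toSeq c (2^(m-1) * (2*(k+1) - 1) - 1) := by
      rw [hi2, extWord_ge a c (by omega) (by omega)]
      congr 1; omega
    rw [hx1, hx2]
  rw [hp1, hp2]

lemma wordVal_ext (hp : ∀ a, 0 < p a) (ℓ : ℕ) (a : ℕ → A) (c : Fin (2^ℓ) → A) :
    wordVal π p q (ℓ+1) (extWord ℓ a c) =
      wprod π p ℓ a * ((q (toSeq c (2^ℓ - 1)) *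
        p ((π (toSeq c (2^ℓ - 1))).symm (a (2^ℓ - 1)))) * wprod π p ℓ (toSeq c)) := by
  rw [wordVal_eq hp, wprod_ext]
  have h2 : (2:ℕ)^(ℓ+1) = 2*2^ℓ := by rw [pow_succ]; ring
  have h1ℓ := Nat.one_le_two_pow (n := ℓ)
  have hlast : extWord ℓ a c (2^(ℓ+1) - 1) = toSeq c (2^ℓ - 1) := by
    rw [extWord_ge a c (by omega) (by omega)]
    congr 1; omega
  rw [hlast]
  ring

theorem consistency (hp : ∀ a, 0 < p a) (hpsum : ∑ a, p a = 1)
    (hqinv : ∀ a' : A, ∑ a : A, p ((π a).symm a') * q a = q a')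
    (ℓ : ℕ) (a : ℕ → A) :
    ∑ c : Fin (2^ℓ) → A, wordVal π p q (ℓ+1) (extWord ℓ a c) = wordVal π p q ℓ a := by
  rw [Finset.sum_congr rfl fun c _ => wordVal_ext hp ℓ a c, ← Finset.mul_sum]
  have hsum : ∑ c : Fin (2^ℓ) → A, ((q (toSeq c (2^ℓ - 1)) *
        p ((π (toSeq c (2^ℓ - 1))).symm (a (2^ℓ - 1)))) * wprod π p ℓ (toSeq c))
      = q (a (2^ℓ - 1)) := by
    have step1 : ∀ c : Fin (2^ℓ) → A,
        (q (toSeq c (2^ℓ - 1)) * p ((π (toSeq c (2^ℓ - 1))).symm (a (2^ℓ - 1)))) *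
            wprod π p ℓ (toSeq c)
        = ∑ b : A, (if toSeq c (2^ℓ - 1) = b
            then (q b * p ((π b).symm (a (2^ℓ - 1)))) * wprod π p ℓ (toSeq c) else 0) := by
      intro c
      rw [Finset.sum_ite_eq, if_pos (Finset.mem_univ _)]
    rw [Finset.sum_congr rfl fun c _ => step1 c, Finset.sum_comm]
    have step2 : ∀ b : A,
        ∑ c : Fin (2^ℓ) → A, (if toSeq c (2^ℓ - 1) = b
            then (q b * p ((π b).symm (a (2^ℓ - 1)))) * wprod π p ℓ (toSeq c) else 0)
        = q b * p ((π b).symm (a (2^ℓ - 1))) := by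
      intro b
      have hite : ∀ c : Fin (2^ℓ) → A,
          (if toSeq c (2^ℓ - 1) = b
            then (q b * p ((π b).symm (a (2^ℓ - 1)))) * wprod π p ℓ (toSeq c) else 0)
          = (q b * p ((π b).symm (a (2^ℓ - 1)))) *
              (if toSeq c (2^ℓ - 1) = b then wprod π p ℓ (toSeq c) else 0) := by
        intro c; split <;> ring
      rw [Finset.sum_congr rfl fun c _ => hite c, ← Finset.mul_sum, sum_last hpsum ℓ b,
        mul_one]
    rw [Finset.sum_congr rfl fun b _ => step2 b, ← hqinv (a (2^ℓ - 1))]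
    exact Finset.sum_congr rfl fun b _ => by ring
  rw [hsum, wordVal_eq hp]
  ring

end Comb


section PS

lemma ps_exists (f : ℕ → ℝ) (n : ℕ) (x : ℝ) (hx0 : 0 ≤ x)
    (hxn : x < ∑ j ∈ Finset.range n, f j) :
    ∃ k, k < n ∧ (∑ j ∈ Finset.range k, f j ≤ x ∧ x < ∑ j ∈ Finset.range (k+1), f j) := by
  induction n with
  | zero => simp at hxn; linarith
  | succ n ih =>
    by_cases h : x < ∑ j ∈ Finset.range n, f j
    · obtain ⟨k, hk, h1, h2⟩ := ih h
      exact ⟨k, by omega, h1, h2⟩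
    · exact ⟨n, by omega, le_of_not_gt h, hxn⟩

lemma ps_unique (f : ℕ → ℝ) (hf : ∀ j, 0 ≤ f j) {k k' : ℕ} {x : ℝ}
    (h1 : ∑ j ∈ Finset.range k, f j ≤ x) (h2 : x < ∑ j ∈ Finset.range (k+1), f j)
    (h1' : ∑ j ∈ Finset.range k', f j ≤ x) (h2' : x < ∑ j ∈ Finset.range (k'+1), f j) :
    k = k' := by
  by_contra hne
  have mono : ∀ {i j : ℕ}, i ≤ j → ∑ l ∈ Finset.range i, f l ≤ ∑ l ∈ Finset.range j, f l := by
    intro i j hij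
    exact Finset.sum_le_sum_of_subset_of_nonneg (Finset.range_subset_range.2 hij)
      (fun l _ _ => hf l)
  rcases Nat.lt_or_ge k k' with h | h
  · have := mono (show k + 1 ≤ k' from by omega)
    linarith
  · have hlt : k' < k := by omega
    have := mono (show k' + 1 ≤ k from by omega)
    linarith

variable {ι : Type*} [Fintype ι] [DecidableEq ι]

noncomputable def lowSum (v : ι → ℝ) (i : ι) : ℝ :=
  ∑ j ∈ Finset.univ.filter
    (fun j => (Fintype.equivFin ι j : ℕ) < (Fintype.equivFin ι i : ℕ)), v j

lemma lowSum_nonneg {v : ι → ℝ} (hv : ∀ i, 0 ≤ v i) (i : ι) : 0 ≤ lowSum v i :=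
  Finset.sum_nonneg fun j _ => hv j

lemma lowSum_add_le {v : ι → ℝ} (hv : ∀ i, 0 ≤ v i) (i : ι) :
    lowSum v i + v i ≤ ∑ j, v j := by
  have hnot : i ∉ Finset.univ.filter
      (fun j => (Fintype.equivFin ι j : ℕ) < (Fintype.equivFin ι i : ℕ)) := by
    simp
  have : lowSum v i + v i = ∑ j ∈ insert i (Finset.univ.filter
      (fun j => (Fintype.equivFin ι j : ℕ) < (Fintype.equivFin ι i : ℕ))), v j := by
    rw [Finset.sum_insert hnot]; unfold lowSum; ring
  rw [this]
  exact Finset.sum_le_sum_of_subset_of_nonneg (Finset.subset_univ _) (fun j _ _ => hv j)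

noncomputable def padVal (v : ι → ℝ) (k : ℕ) : ℝ :=
  if h : k < Fintype.card ι then v ((Fintype.equivFin ι).symm ⟨k, h⟩) else 0

lemma padVal_nonneg {v : ι → ℝ} (hv : ∀ i, 0 ≤ v i) (k : ℕ) : 0 ≤ padVal v k := by
  unfold padVal; split
  · exact hv _
  · exact le_refl 0

lemma sum_padVal (v : ι → ℝ) :
    ∑ k ∈ Finset.range (Fintype.card ι), padVal v k = ∑ i, v i := by
  rw [← Fin.sum_univ_eq_sum_range]
  rw [← Equiv.sum_comp (Fintype.equivFin ι) (fun j => padVal v j.val)]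
  refine Finset.sum_congr rfl fun i _ => ?_
  unfold padVal
  rw [dif_pos (Fintype.equivFin ι i).2]
  congr 1
  rw [show (⟨((Fintype.equivFin ι) i : ℕ), ((Fintype.equivFin ι) i).2⟩ : Fin (Fintype.card ι))
      = Fintype.equivFin ι i from Fin.eta _ _]
  exact Equiv.symm_apply_apply _ _

lemma lowSum_eq_range (v : ι → ℝ) (i : ι) :
    lowSum v i = ∑ k ∈ Finset.range (Fintype.equivFin ι i : ℕ), padVal v k := by
  refine Finset.sum_nbij' (fun j => (Fintype.equivFin ι j : ℕ))
    (fun k => if h : k < Fintype.card ι then (Fintype.equivFin ι).symm ⟨k, h⟩ else i)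
    ?_ ?_ ?_ ?_ ?_
  · intro j hj
    simp only [Finset.mem_filter, Finset.mem_univ, true_and] at hj
    simpa using hj
  · intro k hk
    simp only [Finset.mem_range] at hk
    have hk' : k < Fintype.card ι := lt_trans hk (Fintype.equivFin ι i).2
    rw [dif_pos hk']
    simp only [Finset.mem_filter, Finset.mem_univ, true_and]
    rw [Equiv.apply_symm_apply]
    exact hk
  · intro j hj
    rw [dif_pos ((Fintype.equivFin ι) j).2]
    rw [show (⟨((Fintype.equivFin ι) j : ℕ), ((Fintype.equivFin ι) j).2⟩ : Fin (Fintype.card ι))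
        = Fintype.equivFin ι j from Fin.eta _ _]
    exact Equiv.symm_apply_apply _ _
  · intro k hk
    simp only [Finset.mem_range] at hk
    have hk' : k < Fintype.card ι := lt_trans hk (Fintype.equivFin ι i).2
    rw [dif_pos hk', Equiv.apply_symm_apply]
  · intro j hj
    unfold padVal
    rw [dif_pos ((Fintype.equivFin ι) j).2]
    congr 1
    rw [show (⟨((Fintype.equivFin ι) j : ℕ), ((Fintype.equivFin ι) j).2⟩ : Fin (Fintype.card ι))
        = Fintype.equivFin ι j from Fin.eta _ _]
    exact (Equiv.symm_apply_apply _ _).symm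

lemma lowSum_succ_range (v : ι → ℝ) (i : ι) :
    lowSum v i + v i = ∑ k ∈ Finset.range ((Fintype.equivFin ι i : ℕ) + 1), padVal v k := by
  rw [Finset.sum_range_succ, lowSum_eq_range]
  congr 1
  unfold padVal
  rw [dif_pos ((Fintype.equivFin ι) i).2]
  congr 1
  rw [show (⟨((Fintype.equivFin ι) i : ℕ), ((Fintype.equivFin ι) i).2⟩ : Fin (Fintype.card ι))
      = Fintype.equivFin ι i from Fin.eta _ _]
  exact (Equiv.symm_apply_apply _ _).symm

lemma exists_unique_lowSum (v : ι → ℝ) (hv : ∀ i, 0 < v i) {x : ℝ} (hx0 : 0 ≤ x)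
    (hx1 : x < ∑ i, v i) :
    ∃! i : ι, lowSum v i ≤ x ∧ x < lowSum v i + v i := by
  have hnn : ∀ i, 0 ≤ v i := fun i => (hv i).le
  have htot : x < ∑ k ∈ Finset.range (Fintype.card ι), padVal v k := by
    rwa [sum_padVal]
  obtain ⟨k, hk, h1, h2⟩ := ps_exists (padVal v) (Fintype.card ι) x hx0 htot
  refine ⟨(Fintype.equivFin ι).symm ⟨k, hk⟩, ⟨?_, ?_⟩, ?_⟩
  · rw [lowSum_eq_range, Equiv.apply_symm_apply]
    exact h1
  · rw [lowSum_succ_range, Equiv.apply_symm_apply]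
    exact h2
  · intro u hu
    have hu1 : ∑ j ∈ Finset.range (Fintype.equivFin ι u : ℕ), padVal v j ≤ x := by
      rw [← lowSum_eq_range]; exact hu.1
    have hu2 : x < ∑ j ∈ Finset.range ((Fintype.equivFin ι u : ℕ) + 1), padVal v j := by
      rw [← lowSum_succ_range]; exact hu.2
    have hkk : (Fintype.equivFin ι u : ℕ) = k :=
      ps_unique (padVal v) (padVal_nonneg hnn) hu1 hu2 h1 h2
    have : Fintype.equivFin ι u = ⟨k, hk⟩ := Fin.ext hkk
    rw [← this, Equiv.symm_apply_apply]

end PS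

section Words
variable {A : Type*} [Fintype A] [DecidableEq A] [Nonempty A]

def pre {A : Type*} {ℓ : ℕ} (w : Fin (2^(ℓ+1)) → A) : Fin (2^ℓ) → A :=
  fun i => w ⟨i.val, by
    have h2 : (2:ℕ)^(ℓ+1) = 2*2^ℓ := by rw [pow_succ]; ring
    have := i.2; omega⟩

def suf {A : Type*} {ℓ : ℕ} (w : Fin (2^(ℓ+1)) → A) : Fin (2^ℓ) → A :=
  fun i => w ⟨2^ℓ + i.val, by
    have h2 : (2:ℕ)^(ℓ+1) = 2*2^ℓ := by rw [pow_succ]; ring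
    have := i.2; omega⟩

def join {A : Type*} {ℓ : ℕ} (a c : Fin (2^ℓ) → A) : Fin (2^(ℓ+1)) → A :=
  fun j => if h : j.val < 2^ℓ then a ⟨j.val, h⟩
    else c ⟨j.val - 2^ℓ, by
      have h2 : (2:ℕ)^(ℓ+1) = 2*2^ℓ := by rw [pow_succ]; ring
      have := j.2; omega⟩

omit [Fintype A] [DecidableEq A] [Nonempty A] in
lemma pre_join {ℓ : ℕ} (a c : Fin (2^ℓ) → A) : pre (join a c) = a := by
  funext i
  unfold pre join
  rw [dif_pos i.2]

omit [Fintype A] [DecidableEq A] [Nonempty A] in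
lemma suf_join {ℓ : ℕ} (a c : Fin (2^ℓ) → A) : suf (join a c) = c := by
  funext i
  unfold suf join
  rw [dif_neg (by simp only [Fin.val_mk]; omega)]
  congr 1
  exact Fin.ext (by simp only [Fin.val_mk]; omega)

omit [Fintype A] [DecidableEq A] [Nonempty A] in
lemma join_pre_suf {ℓ : ℕ} (w : Fin (2^(ℓ+1)) → A) : join (pre w) (suf w) = w := by
  funext j
  unfold join pre suf
  by_cases h : j.val < 2^ℓ
  · rw [dif_pos h]
  · rw [dif_neg h]
    congr 1
    exact Fin.ext (by simp only [Fin.val_mk]; omega)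

lemma toSeq_join {ℓ : ℕ} (a c : Fin (2^ℓ) → A) :
    toSeq (join a c) = extWord ℓ (toSeq a) c := by
  have h2 : (2:ℕ)^(ℓ+1) = 2*2^ℓ := by rw [pow_succ]; ring
  funext n
  by_cases h1 : n < 2^ℓ
  · rw [extWord_lt _ _ h1, toSeq_lt _ (by omega : n < 2^(ℓ+1)), toSeq_lt _ h1]
    unfold join
    rw [dif_pos (by simp only [Fin.val_mk]; omega)]
  · by_cases h2' : n < 2^(ℓ+1)
    · rw [extWord_ge _ _ (by omega) h2', toSeq_lt _ h2', toSeq_lt _ (by omega : n - 2^ℓ < 2^ℓ)]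
      unfold join
      rw [dif_neg (by simp only [Fin.val_mk]; omega)]
    · have e1 : toSeq (join a c) n = Classical.arbitrary A := dif_neg (by omega)
      have e2 : extWord ℓ (toSeq a) c n = toSeq a n := by
        unfold extWord
        rw [if_neg (by omega), dif_neg (by omega)]
      have e3 : toSeq a n = Classical.arbitrary A := dif_neg (by omega)
      rw [e1, e2, e3]

def joinEquiv (ℓ : ℕ) : ((Fin (2^ℓ) → A) × (Fin (2^ℓ) → A)) ≃ (Fin (2^(ℓ+1)) → A) where
  toFun ac := join ac.1 ac.2
  invFun w := (pre w, suf w)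
  left_inv := by rintro ⟨a, c⟩; exact Prod.ext (pre_join a c) (suf_join a c)
  right_inv := fun w => join_pre_suf w

variable (π : A → Equiv.Perm A) (p q : A → ℝ)

noncomputable def wval (ℓ : ℕ) (w : Fin (2^ℓ) → A) : ℝ := wordVal π p q ℓ (toSeq w)

noncomputable def lft : (ℓ : ℕ) → (Fin (2^ℓ) → A) → ℝ
  | 0, w => lowSum (wval π p q 0) w
  | (ℓ+1), w => lft ℓ (pre w) +
      lowSum (fun c => wval π p q (ℓ+1) (join (pre w) c)) (suf w)

lemma wval_pos (π : A → Equiv.Perm A) (p : A → ℝ) {q : A → ℝ} (hq : ∀ a, 0 < q a)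
    (ℓ : ℕ) (w : Fin (2^ℓ) → A) : 0 < wval π p q ℓ w := by
  unfold wval wordVal
  exact mul_pos (hq _) (Real.exp_pos _)

variable {π : A → Equiv.Perm A} {p q : A → ℝ} in
lemma sum_wval_join (hp : ∀ a, 0 < p a) (hpsum : ∑ a, p a = 1)
    (hqinv : ∀ a' : A, ∑ a : A, p ((π a).symm a') * q a = q a')
    (ℓ : ℕ) (w : Fin (2^ℓ) → A) :
    ∑ c : Fin (2^ℓ) → A, wval π p q (ℓ+1) (join w c) = wval π p q ℓ w := by
  unfold wval
  rw [Finset.sum_congr rfl fun c _ => by rw [toSeq_join]]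
  exact consistency hp hpsum hqinv ℓ (toSeq w)

variable {π : A → Equiv.Perm A} {p q : A → ℝ} in
lemma sum_wval (hp : ∀ a, 0 < p a) (hpsum : ∑ a, p a = 1)
    (hq : ∀ a, 0 < q a) (hqsum : ∑ a, q a = 1)
    (hqinv : ∀ a' : A, ∑ a : A, p ((π a).symm a') * q a = q a') :
    ∀ ℓ : ℕ, ∑ w : Fin (2^ℓ) → A, wval π p q ℓ w = 1 := by
  intro ℓ
  induction ℓ with
  | zero =>
    rw [← Equiv.sum_comp (singleEquiv (A := A)).symm]
    have h0 : ∀ x : A, wval π p q 0 ((singleEquiv (A := A)).symm x) = q x := by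
      intro x
      unfold wval
      rw [wordVal_eq hp, wprod_zero, mul_one, toSeq_lt _ (by norm_num)]
      rfl
    rw [Finset.sum_congr rfl fun x _ => h0 x]
    exact hqsum
  | succ ℓ ih =>
    rw [← Equiv.sum_comp (joinEquiv (A := A) ℓ), Fintype.sum_prod_type]
    have : ∀ w : Fin (2^ℓ) → A,
        ∑ c : Fin (2^ℓ) → A, wval π p q (ℓ+1) (joinEquiv ℓ (w, c)) = wval π p q ℓ w :=
      fun w => sum_wval_join hp hpsum hqinv ℓ w
    rw [Finset.sum_congr rfl fun w _ => this w]
    exact ih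

variable {π : A → Equiv.Perm A} {p q : A → ℝ} in
lemma lft_join (ℓ : ℕ) (a c : Fin (2^ℓ) → A) :
    lft π p q (ℓ+1) (join a c) = lft π p q ℓ a +
      lowSum (fun c' => wval π p q (ℓ+1) (join a c')) c := by
  show lft π p q ℓ (pre (join a c)) + _ = _
  rw [pre_join, suf_join]

variable {π : A → Equiv.Perm A} {p q : A → ℝ} in
lemma nest (hp : ∀ a, 0 < p a) (hpsum : ∑ a, p a = 1) (hq : ∀ a, 0 < q a)
    (hqinv : ∀ a' : A, ∑ a : A, p ((π a).symm a') * q a = q a')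
    (ℓ : ℕ) (w : Fin (2^(ℓ+1)) → A) :
    lft π p q ℓ (pre w) ≤ lft π p q (ℓ+1) w ∧
      lft π p q (ℓ+1) w + wval π p q (ℓ+1) w ≤
        lft π p q ℓ (pre w) + wval π p q ℓ (pre w) := by
  have hfam : ∀ c, 0 ≤ wval π p q (ℓ+1) (join (pre w) c) :=
    fun c => (wval_pos π p hq _ _).le
  constructor
  · show lft π p q ℓ (pre w) ≤ lft π p q ℓ (pre w) + _
    have := lowSum_nonneg hfam (suf w)
    linarith
  · show lft π p q ℓ (pre w) + _ + _ ≤ _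
    have hle := lowSum_add_le hfam (suf w)
    rw [sum_wval_join hp hpsum hqinv ℓ (pre w)] at hle
    have hw : wval π p q (ℓ+1) w = wval π p q (ℓ+1) (join (pre w) (suf w)) := by
      rw [join_pre_suf]
    rw [hw]
    linarith

variable {π : A → Equiv.Perm A} {p q : A → ℝ} in
lemma lft_bounds (hp : ∀ a, 0 < p a) (hpsum : ∑ a, p a = 1) (hq : ∀ a, 0 < q a)
    (hqsum : ∑ a, q a = 1)
    (hqinv : ∀ a' : A, ∑ a : A, p ((π a).symm a') * q a = q a') :
    ∀ (ℓ : ℕ) (w : Fin (2^ℓ) → A),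
      0 ≤ lft π p q ℓ w ∧ lft π p q ℓ w + wval π p q ℓ w ≤ 1 := by
  intro ℓ
  induction ℓ with
  | zero =>
    intro w
    constructor
    · exact lowSum_nonneg (fun i => (wval_pos π p hq 0 i).le) w
    · have := lowSum_add_le (fun i => (wval_pos π p hq 0 i).le) w
      rw [sum_wval hp hpsum hq hqsum hqinv 0] at this
      exact this
  | succ ℓ ih =>
    intro w
    have hn := nest hp hpsum hq hqinv ℓ w
    have hi := ih (pre w)
    constructor
    · linarith [hn.1, hi.1]
    · linarith [hn.2, hi.2]

variable {π : A → Equiv.Perm A} {p q : A → ℝ} in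
lemma exun (hp : ∀ a, 0 < p a) (hpsum : ∑ a, p a = 1) (hq : ∀ a, 0 < q a)
    (hqsum : ∑ a, q a = 1)
    (hqinv : ∀ a' : A, ∑ a : A, p ((π a).symm a') * q a = q a') :
    ∀ (ℓ : ℕ) (x : ℝ), 0 ≤ x → x < 1 →
      ∃! w : Fin (2^ℓ) → A,
        lft π p q ℓ w ≤ x ∧ x < lft π p q ℓ w + wval π p q ℓ w := by
  intro ℓ
  induction ℓ with
  | zero =>
    intro x hx0 hx1
    have h1 : x < ∑ w : Fin (2^0) → A, wval π p q 0 w := by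
      rw [sum_wval hp hpsum hq hqsum hqinv 0]; exact hx1
    obtain ⟨w, hw, hu⟩ := exists_unique_lowSum (wval π p q 0) (wval_pos π p hq 0) hx0 h1
    exact ⟨w, hw, hu⟩
  | succ ℓ ih =>
    intro x hx0 hx1
    obtain ⟨w, hw, hwu⟩ := ih x hx0 hx1
    have hx0' : 0 ≤ x - lft π p q ℓ w := by linarith [hw.1]
    have hx1' : x - lft π p q ℓ w < ∑ c : Fin (2^ℓ) → A, wval π p q (ℓ+1) (join w c) := by
      rw [sum_wval_join hp hpsum hqinv ℓ w]; linarith [hw.2]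
    obtain ⟨c, hc, hcu⟩ := exists_unique_lowSum (fun c => wval π p q (ℓ+1) (join w c))
      (fun c => wval_pos π p hq _ _) hx0' hx1'
    refine ⟨join w c, ⟨?_, ?_⟩, ?_⟩
    · rw [lft_join]; linarith [hc.1]
    · rw [lft_join]; linarith [hc.2]
    · intro u hu
      have hnu := nest hp hpsum hq hqinv ℓ u
      have hpreu : pre u = w := by
        refine hwu (pre u) ⟨?_, ?_⟩
        · linarith [hnu.1, hu.1]
        · linarith [hnu.2, hu.2]
      have hlu : lft π p q (ℓ+1) u = lft π p q ℓ w +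
          lowSum (fun c' => wval π p q (ℓ+1) (join w c')) (suf u) := by
        conv_lhs => rw [← join_pre_suf u]
        rw [lft_join, hpreu]
      have hvu : wval π p q (ℓ+1) u = wval π p q (ℓ+1) (join w (suf u)) := by
        conv_lhs => rw [← join_pre_suf u, hpreu]
      have hsufu : suf u = c := by
        refine hcu (suf u) ⟨?_, ?_⟩
        · rw [hlu] at hu; linarith [hu.1]
        · rw [hlu, hvu] at hu; linarith [hu.2]
      rw [← join_pre_suf u, hpreu, hsufu]

end Words


end Stmt12Aux

/-- for the substitutions σ_b(a) = (π_a b) a with Bernoulli weights p and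
q the invariant vector of M(a',a) = p(π_a^{-1}a'), the explicit values wordVal are
consistent and define a probability measure μ_ν on A^ℕ which satisfies the substitution
fixed-point equation μ_ν[a] = μ_ν[a_2 a_4 ⋯ a_{2^ℓ}] ∏_k p(π_{a_{2k}}^{-1} a_{2k−1}). -/
theorem stmt12 {A : Type*} [Fintype A] [DecidableEq A] [Nonempty A]
    [MeasurableSpace A] [MeasurableSingletonClass A]
    (π : A → Equiv.Perm A) (p q : A → ℝ)
    (hp : ∀ a, 0 < p a) (hp1 : ∀ a, p a < 1) (hpsum : ∑ a, p a = 1)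
    (hq : ∀ a, 0 < q a) (hqsum : ∑ a, q a = 1)
    (hqinv : ∀ a' : A, ∑ a : A, p ((π a).symm a') * q a = q a') :
    (∀ (ℓ : ℕ) (a : ℕ → A),
      ∑ c : Fin (2 ^ ℓ) → A, wordVal π p q (ℓ + 1) (extWord ℓ a c) = wordVal π p q ℓ a) ∧
    ∃ μ : Measure (ℕ → A), IsProbabilityMeasure μ ∧
      (∀ (ℓ : ℕ) (a : ℕ → A),
        (μ (cylOn (Finset.range (2 ^ ℓ)) a)).toReal = wordVal π p q ℓ a) ∧
      (∀ (ℓ : ℕ) (a : ℕ → A),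
        wordVal π p q (ℓ + 1) a =
          wordVal π p q ℓ (fun n => a (2 * n + 1)) *
            ∏ k ∈ Finset.range (2 ^ ℓ), p ((π (a (2 * k + 1))).symm (a (2 * k)))) := by
  classical
  open Stmt12Aux in
  refine ⟨consistency hp hpsum hqinv, ?_⟩
  have hn2 : ∀ n : ℕ, n < 2^(n+1) := fun n =>
    lt_of_lt_of_le ((Nat.lt_two_pow_self (n := n))) (Nat.pow_le_pow_right (by norm_num) (by omega))
  have exun' : ∀ (ℓ : ℕ) (x : ℝ), ∃ w : Fin (2^ℓ) → A,
      0 ≤ x → x < 1 →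
        ((lft π p q ℓ w ≤ x ∧ x < lft π p q ℓ w + wval π p q ℓ w) ∧
          (∀ u, lft π p q ℓ u ≤ x ∧ x < lft π p q ℓ u + wval π p q ℓ u → u = w)) := by
    intro ℓ x
    by_cases hx : 0 ≤ x ∧ x < 1
    · obtain ⟨w, hw, hu⟩ := exun hp hpsum hq hqsum hqinv ℓ x hx.1 hx.2
      exact ⟨w, fun _ _ => ⟨hw, hu⟩⟩
    · exact ⟨fun _ => Classical.arbitrary A, fun h1 h2 => absurd ⟨h1, h2⟩ hx⟩
  choose W hW using exun'
  have hmem : ∀ ℓ (x : ℝ), 0 ≤ x → x < 1 →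
      lft π p q ℓ (W ℓ x) ≤ x ∧ x < lft π p q ℓ (W ℓ x) + wval π p q ℓ (W ℓ x) :=
    fun ℓ x h0 h1 => (hW ℓ x h0 h1).1
  have huni : ∀ ℓ (x : ℝ), 0 ≤ x → x < 1 → ∀ u,
      lft π p q ℓ u ≤ x ∧ x < lft π p q ℓ u + wval π p q ℓ u → u = W ℓ x :=
    fun ℓ x h0 h1 => (hW ℓ x h0 h1).2
  have hpre : ∀ ℓ (x : ℝ), 0 ≤ x → x < 1 → pre (W (ℓ+1) x) = W ℓ x := by
    intro ℓ x h0 h1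
    have hm := hmem (ℓ+1) x h0 h1
    have hn := nest hp hpsum hq hqinv ℓ (W (ℓ+1) x)
    exact huni ℓ x h0 h1 (pre (W (ℓ+1) x))
      ⟨by linarith [hn.1, hm.1], by linarith [hn.2, hm.2]⟩
  have hcoordle : ∀ (ℓ' ℓ : ℕ), ℓ ≤ ℓ' → ∀ (x : ℝ), 0 ≤ x → x < 1 →
      ∀ n (h1 : n < 2^ℓ) (h2 : n < 2^ℓ'), W ℓ' x ⟨n, h2⟩ = W ℓ x ⟨n, h1⟩ := by
    intro ℓ'
    induction ℓ' with
    | zero =>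
      intro ℓ hle x _ _ n h1 h2
      obtain rfl : ℓ = 0 := by omega
      rfl
    | succ ℓ' ih =>
      intro ℓ hle x h0 h1 n hn1 hn2'
      rcases Nat.eq_or_lt_of_le hle with heq | hlt
      · subst heq; rfl
      · have hle' : ℓ ≤ ℓ' := by omega
        have hd : n < 2^ℓ' := lt_of_lt_of_le hn1 (Nat.pow_le_pow_right (by norm_num) hle')
        have he : W (ℓ'+1) x ⟨n, hn2'⟩ = pre (W (ℓ'+1) x) ⟨n, hd⟩ := rfl
        rw [he, hpre ℓ' x h0 h1]
        exact ih ℓ hle' x h0 h1 n hn1 hd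
  obtain ⟨g, hgdef⟩ : ∃ g : ℝ → ℕ → A, g = fun x n =>
      if hx : 0 ≤ x ∧ x < 1 then W (n+1) x ⟨n, hn2 n⟩ else Classical.arbitrary A := ⟨_, rfl⟩
  have hgpos : ∀ (x : ℝ) (n : ℕ), 0 ≤ x → x < 1 → g x n = W (n+1) x ⟨n, hn2 n⟩ := by
    intro x n h0 h1
    rw [hgdef]
    exact dif_pos ⟨h0, h1⟩
  have hgneg : ∀ (x : ℝ) (n : ℕ), ¬(0 ≤ x ∧ x < 1) → g x n = Classical.arbitrary A := by
    intro x n hx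
    rw [hgdef]
    exact dif_neg hx
  have hgval : ∀ (x : ℝ), 0 ≤ x → x < 1 → ∀ ℓ n (h : n < 2^ℓ), g x n = W ℓ x ⟨n, h⟩ := by
    intro x h0 h1 ℓ n h
    rw [hgpos x n h0 h1]
    rcases le_total ℓ (n+1) with hle | hle
    · exact hcoordle (n+1) ℓ hle x h0 h1 n h (hn2 n)
    · exact (hcoordle ℓ (n+1) hle x h0 h1 n (hn2 n) h).symm
  have hval_wa : ∀ (ℓ : ℕ) (a : ℕ → A),
      wval π p q ℓ (fun i : Fin (2^ℓ) => a i.val) = wordVal π p q ℓ a := by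
    intro ℓ a
    refine wordVal_congr hp fun n hn => ?_
    rw [toSeq_lt _ hn]
  have hcyl : ∀ (ℓ : ℕ) (a : ℕ → A),
      g ⁻¹' (cylOn (Finset.range (2^ℓ)) a) ∩ Set.Ico (0:ℝ) 1
        = Set.Ico (lft π p q ℓ (fun i : Fin (2^ℓ) => a i.val))
            (lft π p q ℓ (fun i : Fin (2^ℓ) => a i.val) +
              wval π p q ℓ (fun i : Fin (2^ℓ) => a i.val)) := by
    intro ℓ a
    ext x
    simp only [Set.mem_inter_iff, Set.mem_preimage, Set.mem_Ico, cylOn, Set.mem_setOf_eq,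
      Finset.mem_range]
    constructor
    · rintro ⟨hcy, hx0, hx1⟩
      have hWx : W ℓ x = fun i : Fin (2^ℓ) => a i.val := by
        funext i
        have h' : g x i.val = a i.val := hcy i.val i.2
        rw [hgval x hx0 hx1 ℓ i.val i.2] at h'
        exact h'
      have hm := hmem ℓ x hx0 hx1
      rw [hWx] at hm
      exact hm
    · intro hx
      have hb := lft_bounds hp hpsum hq hqsum hqinv ℓ (fun i : Fin (2^ℓ) => a i.val)
      have hx0 : (0:ℝ) ≤ x := le_trans hb.1 hx.1
      have hx1 : x < 1 := lt_of_lt_of_le hx.2 hb.2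
      have hWx : (fun i : Fin (2^ℓ) => a i.val) = W ℓ x := huni ℓ x hx0 hx1 _ hx
      refine ⟨?_, hx0, hx1⟩
      intro n hn
      rw [hgval x hx0 hx1 ℓ n hn, ← hWx]
  have hgn : ∀ n : ℕ, Measurable (fun x => g x n) := by
    intro n
    apply measurable_to_countable'
    intro b
    have hset : (fun x => g x n) ⁻¹' {b} =
        (⋃ w ∈ Finset.univ.filter (fun w : Fin (2^(n+1)) → A => w ⟨n, hn2 n⟩ = b),
          Set.Ico (lft π p q (n+1) w) (lft π p q (n+1) w + wval π p q (n+1) w))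
        ∪ (if Classical.arbitrary A = b then (Set.Ico (0:ℝ) 1)ᶜ else ∅) := by
      ext x
      simp only [Set.mem_preimage, Set.mem_singleton_iff, Set.mem_union, Set.mem_iUnion,
        Finset.mem_filter, Finset.mem_univ, true_and, Set.mem_Ico, exists_prop]
      by_cases hx : 0 ≤ x ∧ x < 1
      · have hgx : g x n = W (n+1) x ⟨n, hn2 n⟩ := hgpos x n hx.1 hx.2
        constructor
        · intro hb
          left
          exact ⟨W (n+1) x, by rw [← hgx]; exact hb, hmem (n+1) x hx.1 hx.2⟩
        · rintro (⟨w, hwb, hwx⟩ | hoth)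
          · have h' := huni (n+1) x hx.1 hx.2 w hwx
            rw [hgx, ← h']
            exact hwb
          · exfalso
            by_cases hab : Classical.arbitrary A = b
            · rw [if_pos hab] at hoth
              exact hoth (Set.mem_Ico.2 ⟨hx.1, hx.2⟩)
            · rw [if_neg hab] at hoth
              exact hoth
      · have hgx : g x n = Classical.arbitrary A := hgneg x n hx
        constructor
        · intro hb
          right
          rw [← hgx, if_pos hb]
          intro hmem'
          rw [Set.mem_Ico] at hmem'
          exact hx hmem'
        · rintro (⟨w, hwb, hwx⟩ | hoth)
          · exfalso
            have hb := lft_bounds hp hpsum hq hqsum hqinv (n+1) w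
            exact hx ⟨le_trans hb.1 hwx.1, lt_of_lt_of_le hwx.2 hb.2⟩
          · by_cases hab : Classical.arbitrary A = b
            · rw [hgx]; exact hab
            · rw [if_neg hab] at hoth
              exact absurd hoth (Set.notMem_empty x)
    rw [hset]
    apply MeasurableSet.union
    · exact Finset.measurableSet_biUnion _ (fun w _ => measurableSet_Ico)
    · split_ifs
      · exact measurableSet_Ico.compl
      · exact MeasurableSet.empty
  have hgm : Measurable g := measurable_pi_lambda g hgn
  have hcylmeas : ∀ (F : Finset ℕ) (a : ℕ → A), MeasurableSet (cylOn F a) := by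
    intro F a
    have h' : cylOn F a = ⋂ n ∈ (F : Set ℕ), (fun x : ℕ → A => x n) ⁻¹' {a n} := by
      ext x
      simp [cylOn]
    rw [h']
    exact MeasurableSet.biInter (F : Set ℕ).to_countable
      (fun n _ => (measurable_pi_apply n) (measurableSet_singleton _))
  have hprob : IsProbabilityMeasure (volume.restrict (Set.Ico (0:ℝ) 1)) := by
    constructor
    rw [Measure.restrict_apply_univ, Real.volume_Ico]
    norm_num
  refine ⟨Measure.map g (volume.restrict (Set.Ico (0:ℝ) 1)),
    Measure.isProbabilityMeasure_map hgm.aemeasurable, ?_, ?_⟩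
  · intro ℓ a
    rw [Measure.map_apply hgm (hcylmeas _ a), Measure.restrict_apply (hgm (hcylmeas _ a)),
      hcyl ℓ a, Real.volume_Ico,
      show lft π p q ℓ (fun i : Fin (2^ℓ) => a i.val) +
          wval π p q ℓ (fun i : Fin (2^ℓ) => a i.val) -
          lft π p q ℓ (fun i : Fin (2^ℓ) => a i.val)
        = wval π p q ℓ (fun i : Fin (2^ℓ) => a i.val) from by ring,
      ENNReal.toReal_ofReal (wval_pos π p hq ℓ _).le]
    exact hval_wa ℓ a
  · intro ℓ a
    exact wordVal_succ hp ℓ a
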